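/- For fixed k, the set of diagrammatic weights supported on {1,...,k} with labels in {∧,∨} decomposes into exactly two linkage classes (blocks): the weights with an even number of ∧'s and the weights with an odd number of ∧'s. -/

import Mathlib

/-! STATEMENT 1: For fixed `k`, the set of diagrammatic weights supported on
`{1,…,k}` with labels in `{∧,∨}` decomposes into exactly two linkage classes:
the weights with an even number of `∧`'s and those with an odd number. -/

/-- Weights are `{∧,∨}`-sequences of length `k`, with `true = ∧`, `false = ∨`. -/
abbrev DWeight (k : ℕ) := Fin k → Bool

/-- A basic linkage move: swapping neighboured labels `∧∨ ↔ ∨∧`, or swapping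
the pair `∧∧ ↔ ∨∨` at the first two positions.  (This relation is symmetric.) -/
def basicMove (k : ℕ) (l m : DWeight k) : Prop :=
  (∃ i j : Fin k, (i : ℕ) + 1 = (j : ℕ) ∧ l i ≠ l j ∧ m i = l j ∧ m j = l i ∧
      ∀ t, t ≠ i → t ≠ j → m t = l t) ∨
  (∃ i j : Fin k, (i : ℕ) = 0 ∧ (j : ℕ) = 1 ∧ l i = l j ∧
      m i = !(l i) ∧ m j = !(l j) ∧ ∀ t, t ≠ i → t ≠ j → m t = l t)

namespace LinkAux

variable {k : ℕ}

/-- number of `∧`'s -/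
def cnt (l : DWeight k) : ℕ := (Finset.univ.filter fun i => l i = true).card

lemma cnt_eq_sum (l : DWeight k) : cnt l = ∑ i, if l i = true then 1 else 0 :=
  Finset.card_filter _ _

/-- normal form: `c` trues followed by falses -/
def NW (k c : ℕ) : DWeight k := fun i => decide ((i : ℕ) < c)

lemma cnt_NW (c : ℕ) (h : c ≤ k) : cnt (NW k c) = c := by
  rw [cnt_eq_sum]
  simp only [NW, decide_eq_true_eq]
  rw [Fin.sum_univ_eq_sum_range (fun i => if i < c then 1 else 0) k, ← Finset.card_filter]
  have : (Finset.range k).filter (fun i => i < c) = Finset.range c := by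
    ext t; simp only [Finset.mem_filter, Finset.mem_range]; omega
  rw [this, Finset.card_range]

lemma cnt_comp_perm (l : DWeight k) (σ : Equiv.Perm (Fin k)) : cnt (l ∘ σ) = cnt l := by
  rw [cnt_eq_sum, cnt_eq_sum]
  exact Fintype.sum_equiv σ _ _ (fun t => rfl)

lemma bm_symm : Symmetric (basicMove k) := by
  rintro l m (⟨i, j, hij, hne, hmi, hmj, hrest⟩ | ⟨i, j, hi, hj, heq, hmi, hmj, hrest⟩)
  · exact Or.inl ⟨i, j, hij, by rw [hmi, hmj]; exact hne.symm, hmj.symm, hmi.symm,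
      fun t ht1 ht2 => (hrest t ht1 ht2).symm⟩
  · exact Or.inr ⟨i, j, hi, hj, by rw [hmi, hmj, heq], by rw [hmi, Bool.not_not],
      by rw [hmj, Bool.not_not], fun t ht1 ht2 => (hrest t ht1 ht2).symm⟩

lemma swap_eq {l m : DWeight k} {i j : Fin k} (hne : i ≠ j)
    (hmi : m i = l j) (hmj : m j = l i) (hrest : ∀ t, t ≠ i → t ≠ j → m t = l t) :
    m = l ∘ Equiv.swap i j := by
  funext t
  by_cases h1 : t = i
  · subst h1; simp [Equiv.swap_apply_left, hmi]
  by_cases h2 : t = j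
  · subst h2; simp [Equiv.swap_apply_right, hmj]
  · simp [Equiv.swap_apply_of_ne_of_ne h1 h2, hrest t h1 h2]

lemma parity_basicMove {l m : DWeight k} (h : basicMove k l m) :
    (cnt l : ZMod 2) = (cnt m : ZMod 2) := by
  rcases h with ⟨i, j, hij, hne, hmi, hmj, hrest⟩ | ⟨i, j, hi, hj, heq, hmi, hmj, hrest⟩
  · have hij' : i ≠ j := by intro h; rw [h] at hij; omega
    rw [swap_eq hij' hmi hmj hrest, cnt_comp_perm]
  · have hij' : i ≠ j := by intro h; rw [h] at hi; omega
    have key : ∑ t, ((if m t = true then (1 : ZMod 2) else 0)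
        - (if l t = true then (1 : ZMod 2) else 0)) = 0 := by
      rw [← Finset.sum_subset (Finset.subset_univ {i, j})]
      · rw [Finset.sum_pair hij']
        have e1 : ∀ b : Bool, (if (!b) = true then (1 : ZMod 2) else 0)
            - (if b = true then (1 : ZMod 2) else 0) = 1 := by decide
        rw [hmi, hmj, e1, e1]; decide
      · intro t _ ht
        simp only [Finset.mem_insert, Finset.mem_singleton, not_or] at ht
        rw [hrest t ht.1 ht.2, sub_self]
    rw [Finset.sum_sub_distrib, sub_eq_zero] at key
    rw [cnt_eq_sum, cnt_eq_sum]
    push_cast [apply_ite (Nat.cast : ℕ → ZMod 2)]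
    exact key.symm

/-- sorting: every weight is linked to its normal form -/
lemma sort (l : DWeight k) :
    Relation.ReflTransGen (basicMove k) l (NW k (cnt l)) := by
  generalize hW : (∑ t, if l t = true then (t : ℕ) else 0) = n
  induction n using Nat.strong_induction_on generalizing l with
  | _ n ih =>
  by_cases hd : ∃ i j : Fin k, (i : ℕ) + 1 = (j : ℕ) ∧ l i = false ∧ l j = true
  · obtain ⟨i, j, hij, hli, hlj⟩ := hd
    have hij' : i ≠ j := by intro h; rw [h] at hij; omega
    set m : DWeight k := l ∘ Equiv.swap i j with hm
    have hmi : m i = l j := by simp [hm, Equiv.swap_apply_left]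
    have hmj : m j = l i := by simp [hm, Equiv.swap_apply_right]
    have hrest : ∀ t, t ≠ i → t ≠ j → m t = l t := by
      intro t h1 h2; simp [hm, Equiv.swap_apply_of_ne_of_ne h1 h2]
    have hbm : basicMove k l m :=
      Or.inl ⟨i, j, hij, by rw [hli, hlj]; exact Bool.false_ne_true, hmi, hmj, hrest⟩
    have hcnt : cnt m = cnt l := cnt_comp_perm l _
    have hWlt : (∑ t, if m t = true then (t : ℕ) else 0) < n := by
      rw [← hW]
      have split : ∀ f : Fin k → Bool,
          (∑ t, if f t = true then (t : ℕ) else 0)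
            = (∑ t ∈ ({i, j} : Finset (Fin k)), if f t = true then (t : ℕ) else 0)
              + ∑ t ∈ ({i, j} : Finset (Fin k))ᶜ, if f t = true then (t : ℕ) else 0 :=
        fun f => (Finset.sum_add_sum_compl _ _).symm
      rw [split m, split l]
      have hc : (∑ t ∈ ({i, j} : Finset (Fin k))ᶜ, if m t = true then (t : ℕ) else 0)
          = ∑ t ∈ ({i, j} : Finset (Fin k))ᶜ, if l t = true then (t : ℕ) else 0 := by
        apply Finset.sum_congr rfl
        intro t ht
        simp only [Finset.mem_compl, Finset.mem_insert, Finset.mem_singleton, not_or] at ht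
        rw [hrest t ht.1 ht.2]
      rw [hc]
      apply Nat.add_lt_add_right
      rw [Finset.sum_pair hij', Finset.sum_pair hij', hmi, hmj, hli, hlj]
      simp; omega
    have tail := ih _ hWlt m rfl
    rw [hcnt] at tail
    exact Relation.ReflTransGen.head hbm tail
  · -- no descent: l is already sorted, i.e. l = NW k (cnt l)
    push_neg at hd
    -- downward closedness
    have hdc : ∀ n : ℕ, ∀ i j : Fin k, (i : ℕ) = (j : ℕ) + n → l i = true → l j = true := by
      intro n
      induction n with
      | zero =>
        intro i j hij hi
        have : i = j := Fin.ext (by omega)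
        rwa [← this]
      | succ n ihn =>
        intro i j hij hi
        have hi0 : 1 ≤ (i : ℕ) := by omega
        have hlt : (i : ℕ) - 1 < k := by omega
        set i' : Fin k := ⟨(i : ℕ) - 1, hlt⟩ with hi'
        have hstep : (i' : ℕ) + 1 = (i : ℕ) := by simp [hi']; omega
        have hli' : l i' = true := by
          by_contra hfalse
          have : l i' = false := by
            cases h : l i' <;> simp_all
          have := hd i' i hstep this
          rw [hi] at this; simp at this
        exact ihn i' j (by simp [hi']; omega) hli'
    have hdc' : ∀ i j : Fin k, (j : ℕ) ≤ (i : ℕ) → l i = true → l j = true := by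
      intro i j hle hi
      exact hdc ((i : ℕ) - (j : ℕ)) i j (by omega) hi
    have hiff : ∀ i : Fin k, l i = true ↔ (i : ℕ) < cnt l := by
      intro i
      constructor
      · intro hi
        have hsub : Finset.Iic i ⊆ Finset.univ.filter fun t => l t = true := by
          intro t ht
          rw [Finset.mem_Iic] at ht
          simp only [Finset.mem_filter, Finset.mem_univ, true_and]
          exact hdc' i t ht hi
        have := Finset.card_le_card hsub
        rw [Fin.card_Iic] at this
        exact this
      · intro hi
        by_contra hfalse
        have hsub : (Finset.univ.filter fun t => l t = true) ⊆ Finset.Iio i := by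
          intro t ht
          simp only [Finset.mem_filter, Finset.mem_univ, true_and] at ht
          rw [Finset.mem_Iio]
          by_contra hge
          push_neg at hge
          exact hfalse (hdc' t i hge ht)
        have := Finset.card_le_card hsub
        rw [Fin.card_Iio] at this
        have : cnt l ≤ (i : ℕ) := this
        omega
    have : l = NW k (cnt l) := by
      funext i
      have := hiff i
      cases h : l i with
      | true => simp only [NW]; rw [h] at this; simp [this.mp rfl]
      | false =>
        simp only [NW]
        rw [h] at this
        symm
        rw [decide_eq_false_iff_not]
        intro hlt
        exact Bool.false_ne_true (this.mpr hlt)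
    rw [← this]

/-- step down by two in the normal form -/
lemma stepdown (c : ℕ) (h2 : 2 ≤ c) (hk : c ≤ k) :
    Relation.ReflTransGen (basicMove k) (NW k c) (NW k (c - 2)) := by
  have hk2 : 2 ≤ k := le_trans h2 hk
  set m : DWeight k := fun t => decide (2 ≤ (t : ℕ) ∧ (t : ℕ) < c) with hm
  set i : Fin k := ⟨0, by omega⟩ with hi
  set j : Fin k := ⟨1, by omega⟩ with hj
  have hbm : basicMove k (NW k c) m := by
    refine Or.inr ⟨i, j, rfl, rfl, ?_, ?_, ?_, ?_⟩
    · simp [NW, hi, hj]; omega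
    · simp [NW, hm, hi]; omega
    · simp [NW, hm, hj]; omega
    · intro t ht1 ht2
      have h1 : (t : ℕ) ≠ 0 := fun h => ht1 (Fin.ext h)
      have h2' : (t : ℕ) ≠ 1 := fun h => ht2 (Fin.ext h)
      simp only [hm, NW, decide_eq_decide]
      omega
  have hcnt : cnt m = c - 2 := by
    rw [cnt_eq_sum]
    simp only [hm, decide_eq_true_eq]
    rw [Fin.sum_univ_eq_sum_range (fun t => if 2 ≤ t ∧ t < c then 1 else 0) k,
      ← Finset.card_filter]
    have : (Finset.range k).filter (fun t => 2 ≤ t ∧ t < c) = Finset.Ico 2 c := by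
      ext t; simp only [Finset.mem_filter, Finset.mem_range, Finset.mem_Ico]; omega
    rw [this, Nat.card_Ico]
  have tail := sort m
  rw [hcnt] at tail
  exact Relation.ReflTransGen.head hbm tail

lemma chain (c : ℕ) (hk : c ≤ k) :
    Relation.ReflTransGen (basicMove k) (NW k c) (NW k (c % 2)) := by
  induction c using Nat.strong_induction_on with
  | _ c ih =>
  by_cases h2 : 2 ≤ c
  · have h1 := stepdown c h2 hk
    have h2' := ih (c - 2) (by omega) (by omega)
    have : (c - 2) % 2 = c % 2 := by omega
    rw [this] at h2'
    exact h1.trans h2'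
  · have : c % 2 = c := by omega
    rw [this]

end LinkAux

/-- Two weights are linked (lie in the same block) iff they have the same parity
of the number of `∧`'s; moreover (for `k ≥ 1`) both parities occur, so there are
exactly two blocks: the even block `Λ_k^{0̄}` and the odd block `Λ_k^{1̄}`. -/
theorem linkage_classes (k : ℕ) :
    (∀ l m : DWeight k,
      Relation.ReflTransGen (basicMove k) l m ↔
        (Finset.univ.filter fun i => l i = true).card % 2
          = (Finset.univ.filter fun i => m i = true).card % 2) ∧
    (1 ≤ k → ∃ l m : DWeight k, ¬ Relation.ReflTransGen (basicMove k) l m) := by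
  have fwd : ∀ l m : DWeight k, Relation.ReflTransGen (basicMove k) l m →
      LinkAux.cnt l % 2 = LinkAux.cnt m % 2 := by
    intro l m h
    induction h with
    | refl => rfl
    | tail h1 h2 ih =>
      have hp := LinkAux.parity_basicMove h2
      rw [ZMod.natCast_eq_natCast_iff] at hp
      exact ih.trans hp
  have cntle : ∀ l : DWeight k, LinkAux.cnt l ≤ k := fun l =>
    le_trans (Finset.card_filter_le _ _) (by simp)
  constructor
  · intro l m
    constructor
    · exact fwd l m
    · intro h
      have hl := (LinkAux.sort l).trans (LinkAux.chain _ (cntle l))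
      have hm := (LinkAux.sort m).trans (LinkAux.chain _ (cntle m))
      have h' : LinkAux.cnt l % 2 = LinkAux.cnt m % 2 := h
      rw [h'] at hl
      haveI : Std.Symm (basicMove k) := ⟨fun a b h => LinkAux.bm_symm h⟩
      exact hl.trans ((Relation.ReflTransGen.symmetric (r := basicMove k)).symm _ _ hm)
  · intro hk
    refine ⟨LinkAux.NW k 0, LinkAux.NW k 1, fun h => ?_⟩
    have := fwd _ _ h
    rw [LinkAux.cnt_NW 0 (by omega), LinkAux.cnt_NW 1 hk] at this
    omega
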